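/- Let F : ℝ² → [0,1] be a bivariate distribution function that is Lipschitz continuous, with marginal distribution functions F_X and F_Y, let (X,Y) be a random vector with distribution function F, and let h be the Kendall kernel. Then for every (x,y) ∈ ℝ²: E[h((x,y),(X,Y))] = 4F(x,y) − 2F_X(x) − 2F_Y(y) + 1. In particular, the linear part h₁(x,y) = E[h((x,y),(X,Y))] − τ of the Hoeffding decomposition of Kendall's tau equals 4F(x,y) − 2F_X(x) − 2F_Y(y) + 1 − τ, where τ = 4E[F(X,Y)] − 1 is Kendall's tau of F. -/

import Mathlib

open MeasureTheory

/-- The Kendall kernel: `h((x₁,y₁),(x₂,y₂)) = sign((x₂−x₁)(y₂−y₁))`. -/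
noncomputable def kendallKernel (z w : ℝ × ℝ) : ℝ :=
  if 0 < (w.1 - z.1) * (w.2 - z.2) then 1
  else if (w.1 - z.1) * (w.2 - z.2) < 0 then -1
  else 0

/-- A Lipschitz bivariate cdf gives null vertical lines. -/
lemma kendall_null_line_x
    (ν : Measure (ℝ × ℝ)) [IsProbabilityMeasure ν]
    (F : ℝ → ℝ → ℝ)
    (hF : ∀ x y : ℝ, F x y = (ν {p : ℝ × ℝ | p.1 ≤ x ∧ p.2 ≤ y}).toReal)
    (C : ℝ) (hLip : ∀ x y x' y' : ℝ, |F x y - F x' y'| ≤ C * (|x - x'| + |y - y'|))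
    (x : ℝ) : ν {p : ℝ × ℝ | p.1 = x} = 0 := by
  have hC : 0 ≤ C := by
    have := hLip 0 0 1 0
    simp at this
    exact le_trans (abs_nonneg _) this
  have key : ∀ ε : ℝ, 0 < ε → ν {p : ℝ × ℝ | p.1 = x} ≤ ENNReal.ofReal (C * ε) := by
    intro ε hε
    set T : ℕ → Set (ℝ × ℝ) := fun n => {p : ℝ × ℝ | x - ε < p.1 ∧ p.1 ≤ x ∧ p.2 ≤ n} with hT
    have hmono : Monotone T := by
      intro m n hmn p hp
      exact ⟨hp.1, hp.2.1, hp.2.2.trans (by exact_mod_cast Nat.cast_le.mpr hmn)⟩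
    have hsub : {p : ℝ × ℝ | p.1 = x} ⊆ ⋃ n, T n := by
      intro p hp
      obtain ⟨n, hn⟩ := exists_nat_ge p.2
      exact Set.mem_iUnion.mpr ⟨n, by
        simp only [hT, Set.mem_setOf_eq] at hp ⊢
        exact ⟨by linarith [hp], le_of_eq hp, hn⟩⟩
    have hTn : ∀ n : ℕ, ν (T n) ≤ ENNReal.ofReal (C * ε) := by
      intro n
      set A : Set (ℝ × ℝ) := {p : ℝ × ℝ | p.1 ≤ x ∧ p.2 ≤ (n : ℝ)} with hA
      set B : Set (ℝ × ℝ) := {p : ℝ × ℝ | p.1 ≤ x - ε ∧ p.2 ≤ (n : ℝ)} with hB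
      have hBA : B ⊆ A := fun p hp => ⟨hp.1.trans (by linarith), hp.2⟩
      have hBm : MeasurableSet B :=
        (measurableSet_le measurable_fst measurable_const).inter
          (measurableSet_le measurable_snd measurable_const)
      have hTAB : T n = A \ B := by
        ext p
        simp only [hT, hA, hB, Set.mem_setOf_eq, Set.mem_diff]
        constructor
        · rintro ⟨h1, h2, h3⟩
          exact ⟨⟨h2, h3⟩, fun h => by linarith [h.1]⟩
        · rintro ⟨⟨h2, h3⟩, h⟩
          refine ⟨?_, h2, h3⟩
          by_contra hc
          exact h ⟨by linarith, h3⟩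
      have hdiff : ν (T n) = ν A - ν B := by
        rw [hTAB]; exact measure_diff hBA hBm.nullMeasurableSet (measure_ne_top ν B)
      rw [hdiff]
      rw [ENNReal.le_ofReal_iff_toReal_le (by
        exact ne_top_of_le_ne_top (measure_ne_top ν A) tsub_le_self) (by positivity)]
      rw [ENNReal.toReal_sub_of_le (measure_mono hBA) (measure_ne_top ν A)]
      have h1 : (ν A).toReal = F x n := (hF x n).symm
      have h2 : (ν B).toReal = F (x - ε) n := (hF (x - ε) n).symm
      rw [h1, h2]
      have := hLip x n (x - ε) n
      have habs : |x - (x - ε)| + |(n : ℝ) - n| = ε := by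
        simp [abs_of_pos hε]
      rw [habs] at this
      calc F x ↑n - F (x - ε) ↑n ≤ |F x ↑n - F (x - ε) ↑n| := le_abs_self _
        _ ≤ C * ε := this
    calc ν {p : ℝ × ℝ | p.1 = x} ≤ ν (⋃ n, T n) := measure_mono hsub
      _ = ⨆ n, ν (T n) := Directed.measure_iUnion (hmono.directed_le)
      _ ≤ ENNReal.ofReal (C * ε) := iSup_le hTn
  have htr : (ν {p : ℝ × ℝ | p.1 = x}).toReal ≤ 0 := by
    by_contra h
    push_neg at h
    set t := (ν {p : ℝ × ℝ | p.1 = x}).toReal with ht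
    have h2 : t ≤ C * (t / (C + 1)) :=
      ENNReal.toReal_le_of_le_ofReal (by positivity) (key _ (by positivity))
    have h4 : C * (t / (C + 1)) < t := by
      rw [mul_div_assoc']
      rw [div_lt_iff₀ (by linarith)]
      nlinarith
    linarith
  have := le_antisymm htr ENNReal.toReal_nonneg
  exact ((ENNReal.toReal_eq_zero_iff _).mp this).resolve_right (measure_ne_top ν _)

/-- A Lipschitz bivariate cdf gives null horizontal lines. -/
lemma kendall_null_line_y
    (ν : Measure (ℝ × ℝ)) [IsProbabilityMeasure ν]
    (F : ℝ → ℝ → ℝ)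
    (hF : ∀ x y : ℝ, F x y = (ν {p : ℝ × ℝ | p.1 ≤ x ∧ p.2 ≤ y}).toReal)
    (C : ℝ) (hLip : ∀ x y x' y' : ℝ, |F x y - F x' y'| ≤ C * (|x - x'| + |y - y'|))
    (y : ℝ) : ν {p : ℝ × ℝ | p.2 = y} = 0 := by
  have hC : 0 ≤ C := by
    have := hLip 0 0 1 0
    simp at this
    exact le_trans (abs_nonneg _) this
  have key : ∀ ε : ℝ, 0 < ε → ν {p : ℝ × ℝ | p.2 = y} ≤ ENNReal.ofReal (C * ε) := by
    intro ε hε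
    set T : ℕ → Set (ℝ × ℝ) := fun n => {p : ℝ × ℝ | y - ε < p.2 ∧ p.2 ≤ y ∧ p.1 ≤ n} with hT
    have hmono : Monotone T := by
      intro m n hmn p hp
      exact ⟨hp.1, hp.2.1, hp.2.2.trans (by exact_mod_cast Nat.cast_le.mpr hmn)⟩
    have hsub : {p : ℝ × ℝ | p.2 = y} ⊆ ⋃ n, T n := by
      intro p hp
      obtain ⟨n, hn⟩ := exists_nat_ge p.1
      exact Set.mem_iUnion.mpr ⟨n, by
        simp only [hT, Set.mem_setOf_eq] at hp ⊢
        exact ⟨by linarith [hp], le_of_eq hp, hn⟩⟩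
    have hTn : ∀ n : ℕ, ν (T n) ≤ ENNReal.ofReal (C * ε) := by
      intro n
      set A : Set (ℝ × ℝ) := {p : ℝ × ℝ | p.1 ≤ (n : ℝ) ∧ p.2 ≤ y} with hA
      set B : Set (ℝ × ℝ) := {p : ℝ × ℝ | p.1 ≤ (n : ℝ) ∧ p.2 ≤ y - ε} with hB
      have hBA : B ⊆ A := fun p hp => ⟨hp.1, hp.2.trans (by linarith)⟩
      have hBm : MeasurableSet B :=
        (measurableSet_le measurable_fst measurable_const).inter
          (measurableSet_le measurable_snd measurable_const)
      have hTAB : T n = A \ B := by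
        ext p
        simp only [hT, hA, hB, Set.mem_setOf_eq, Set.mem_diff]
        constructor
        · rintro ⟨h1, h2, h3⟩
          exact ⟨⟨h3, h2⟩, fun h => by linarith [h.2]⟩
        · rintro ⟨⟨h3, h2⟩, h⟩
          refine ⟨?_, h2, h3⟩
          by_contra hc
          exact h ⟨h3, by linarith⟩
      have hdiff : ν (T n) = ν A - ν B := by
        rw [hTAB]; exact measure_diff hBA hBm.nullMeasurableSet (measure_ne_top ν B)
      rw [hdiff]
      rw [ENNReal.le_ofReal_iff_toReal_le (by
        exact ne_top_of_le_ne_top (measure_ne_top ν A) tsub_le_self) (by positivity)]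
      rw [ENNReal.toReal_sub_of_le (measure_mono hBA) (measure_ne_top ν A)]
      have h1 : (ν A).toReal = F n y := (hF n y).symm
      have h2 : (ν B).toReal = F n (y - ε) := (hF n (y - ε)).symm
      rw [h1, h2]
      have := hLip n y n (y - ε)
      have habs : |(n : ℝ) - n| + |y - (y - ε)| = ε := by
        simp [abs_of_pos hε]
      rw [habs] at this
      calc F ↑n y - F ↑n (y - ε) ≤ |F ↑n y - F ↑n (y - ε)| := le_abs_self _
        _ ≤ C * ε := this
    calc ν {p : ℝ × ℝ | p.2 = y} ≤ ν (⋃ n, T n) := measure_mono hsub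
      _ = ⨆ n, ν (T n) := Directed.measure_iUnion (hmono.directed_le)
      _ ≤ ENNReal.ofReal (C * ε) := iSup_le hTn
  have htr : (ν {p : ℝ × ℝ | p.2 = y}).toReal ≤ 0 := by
    by_contra h
    push_neg at h
    set t := (ν {p : ℝ × ℝ | p.2 = y}).toReal with ht
    have h2 : t ≤ C * (t / (C + 1)) :=
      ENNReal.toReal_le_of_le_ofReal (by positivity) (key _ (by positivity))
    have h4 : C * (t / (C + 1)) < t := by
      rw [mul_div_assoc']
      rw [div_lt_iff₀ (by linarith)]
      nlinarith
    linarith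
  have := le_antisymm htr ENNReal.toReal_nonneg
  exact ((ENNReal.toReal_eq_zero_iff _).mp this).resolve_right (measure_ne_top ν _)

/-- For a Lipschitz continuous bivariate distribution function `F` of the
law `ν`, with marginals `F_X, F_Y`, one has
`E[h((x,y),(X,Y))] = 4F(x,y) − 2F_X(x) − 2F_Y(y) + 1` for every `(x,y)`; in particular the
linear part `h₁(x,y) = E[h((x,y),(X,Y))] − τ` of the Hoeffding decomposition equals
`4F(x,y) − 2F_X(x) − 2F_Y(y) + 1 − τ`, where `τ = 4E[F(X,Y)] − 1`. -/
theorem kendall_kernel_linear_part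
    (ν : Measure (ℝ × ℝ)) [IsProbabilityMeasure ν]
    (F : ℝ → ℝ → ℝ) (FX FY : ℝ → ℝ)
    (hF : ∀ x y : ℝ, F x y = (ν {p : ℝ × ℝ | p.1 ≤ x ∧ p.2 ≤ y}).toReal)
    (hFX : ∀ x : ℝ, FX x = (ν {p : ℝ × ℝ | p.1 ≤ x}).toReal)
    (hFY : ∀ y : ℝ, FY y = (ν {p : ℝ × ℝ | p.2 ≤ y}).toReal)
    (C : ℝ) (hLip : ∀ x y x' y' : ℝ, |F x y - F x' y'| ≤ C * (|x - x'| + |y - y'|)) :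
    (∀ x y : ℝ,
      ∫ p : ℝ × ℝ, kendallKernel (x, y) p ∂ν = 4 * F x y - 2 * FX x - 2 * FY y + 1)
    ∧ (∀ x y : ℝ,
      (∫ p : ℝ × ℝ, kendallKernel (x, y) p ∂ν) - (4 * (∫ p : ℝ × ℝ, F p.1 p.2 ∂ν) - 1)
        = 4 * F x y - 2 * FX x - 2 * FY y + 1 - (4 * (∫ p : ℝ × ℝ, F p.1 p.2 ∂ν) - 1)) := by
  have main : ∀ x y : ℝ,
      ∫ p : ℝ × ℝ, kendallKernel (x, y) p ∂ν = 4 * F x y - 2 * FX x - 2 * FY y + 1 := by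
    intro x y
    have hLx : ν {p : ℝ × ℝ | p.1 = x} = 0 := kendall_null_line_x ν F hF C hLip x
    have hLy : ν {p : ℝ × ℝ | p.2 = y} = 0 := kendall_null_line_y ν F hF C hLip y
    set A1 : Set (ℝ × ℝ) := {p : ℝ × ℝ | x < p.1 ∧ y < p.2} with hA1def
    set A2 : Set (ℝ × ℝ) := {p : ℝ × ℝ | p.1 < x ∧ p.2 < y} with hA2def
    set B1 : Set (ℝ × ℝ) := {p : ℝ × ℝ | x < p.1 ∧ p.2 < y} with hB1def
    set B2 : Set (ℝ × ℝ) := {p : ℝ × ℝ | p.1 < x ∧ y < p.2} with hB2def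
    have m1 : MeasurableSet A1 :=
      (measurableSet_lt measurable_const measurable_fst).inter
        (measurableSet_lt measurable_const measurable_snd)
    have m2 : MeasurableSet A2 :=
      (measurableSet_lt measurable_fst measurable_const).inter
        (measurableSet_lt measurable_snd measurable_const)
    have m3 : MeasurableSet B1 :=
      (measurableSet_lt measurable_const measurable_fst).inter
        (measurableSet_lt measurable_snd measurable_const)
    have m4 : MeasurableSet B2 :=
      (measurableSet_lt measurable_fst measurable_const).inter
        (measurableSet_lt measurable_const measurable_snd)
    -- pointwise identity
    have hker : ∀ p : ℝ × ℝ, kendallKernel (x, y) p =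
        (A1.indicator (fun _ => (1:ℝ)) p + A2.indicator (fun _ => (1:ℝ)) p)
        - (B1.indicator (fun _ => (1:ℝ)) p + B2.indicator (fun _ => (1:ℝ)) p) := by
      intro p
      simp only [kendallKernel, hA1def, hA2def, hB1def, hB2def, Set.indicator_apply,
        Set.mem_setOf_eq]
      rcases lt_trichotomy p.1 x with h1 | h1 | h1 <;>
        rcases lt_trichotomy p.2 y with h2 | h2 | h2
      · have hs : 0 < (p.1 - x) * (p.2 - y) :=
          mul_pos_of_neg_of_neg (by linarith) (by linarith)
        simp [hs, h1, h2, lt_asymm h1, lt_asymm h2]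
      · have hs : (p.1 - x) * (p.2 - y) = 0 := by rw [h2]; ring
        simp [hs, h1, h2, lt_asymm h1, lt_irrefl]
      · have hs : (p.1 - x) * (p.2 - y) < 0 :=
          mul_neg_of_neg_of_pos (by linarith) (by linarith)
        simp [hs, lt_asymm hs, h1, h2, lt_asymm h1, lt_asymm h2]
      · have hs : (p.1 - x) * (p.2 - y) = 0 := by rw [h1]; ring
        simp [hs, h1, h2, lt_asymm h2, lt_irrefl]
      · have hs : (p.1 - x) * (p.2 - y) = 0 := by rw [h1]; ring
        simp [hs, h1, h2, lt_irrefl]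
      · have hs : (p.1 - x) * (p.2 - y) = 0 := by rw [h1]; ring
        simp [hs, h1, h2, lt_asymm h2, lt_irrefl]
      · have hs : (p.1 - x) * (p.2 - y) < 0 :=
          mul_neg_of_pos_of_neg (by linarith) (by linarith)
        simp [hs, lt_asymm hs, h1, h2, lt_asymm h1, lt_asymm h2]
      · have hs : (p.1 - x) * (p.2 - y) = 0 := by rw [h2]; ring
        simp [hs, h1, h2, lt_asymm h1, lt_irrefl]
      · have hs : 0 < (p.1 - x) * (p.2 - y) :=
          mul_pos (by linarith) (by linarith)
        simp [hs, h1, h2, lt_asymm h1, lt_asymm h2]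
    -- integrability
    have i1 : Integrable (A1.indicator fun _ => (1:ℝ)) ν := (integrable_const 1).indicator m1
    have i2 : Integrable (A2.indicator fun _ => (1:ℝ)) ν := (integrable_const 1).indicator m2
    have i3 : Integrable (B1.indicator fun _ => (1:ℝ)) ν := (integrable_const 1).indicator m3
    have i4 : Integrable (B2.indicator fun _ => (1:ℝ)) ν := (integrable_const 1).indicator m4
    have hint : ∫ p : ℝ × ℝ, kendallKernel (x, y) p ∂ν
        = (ν A1).toReal + (ν A2).toReal - ((ν B1).toReal + (ν B2).toReal) := by
      have iA : Integrable (fun p : ℝ × ℝ =>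
          A1.indicator (fun _ => (1:ℝ)) p + A2.indicator (fun _ => (1:ℝ)) p) ν := i1.add i2
      have iB : Integrable (fun p : ℝ × ℝ =>
          B1.indicator (fun _ => (1:ℝ)) p + B2.indicator (fun _ => (1:ℝ)) p) ν := i3.add i4
      rw [show (fun p : ℝ × ℝ => kendallKernel (x, y) p)
          = fun p => (A1.indicator (fun _ => (1:ℝ)) p + A2.indicator (fun _ => (1:ℝ)) p)
            - (B1.indicator (fun _ => (1:ℝ)) p + B2.indicator (fun _ => (1:ℝ)) p)
          from funext hker]
      rw [integral_sub iA iB, integral_add i1 i2, integral_add i3 i4,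
        integral_indicator_const (1:ℝ) m1, integral_indicator_const (1:ℝ) m2,
        integral_indicator_const (1:ℝ) m3, integral_indicator_const (1:ℝ) m4]
      simp
      rfl
    -- measure identities
    set Fc : Set (ℝ × ℝ) := {p : ℝ × ℝ | p.1 ≤ x ∧ p.2 ≤ y} with hFcdef
    set SX : Set (ℝ × ℝ) := {p : ℝ × ℝ | p.1 ≤ x} with hSXdef
    set SY : Set (ℝ × ℝ) := {p : ℝ × ℝ | p.2 ≤ y} with hSYdef
    have mFc : MeasurableSet Fc :=
      (measurableSet_le measurable_fst measurable_const).inter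
        (measurableSet_le measurable_snd measurable_const)
    have mSX : MeasurableSet SX := measurableSet_le measurable_fst measurable_const
    have mSY : MeasurableSet SY := measurableSet_le measurable_snd measurable_const
    -- ν A2 = ν Fc
    have hA2 : (ν A2).toReal = F x y := by
      have hle : ν A2 ≤ ν Fc :=
        measure_mono fun p hp => ⟨le_of_lt hp.1, le_of_lt hp.2⟩
      have hge : ν Fc ≤ ν A2 := by
        calc ν Fc ≤ ν (A2 ∪ ({p : ℝ × ℝ | p.1 = x} ∪ {p : ℝ × ℝ | p.2 = y})) := by
              apply measure_mono
              intro p hp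
              rcases hp.1.lt_or_eq with h1 | h1
              · rcases hp.2.lt_or_eq with h2 | h2
                · exact Or.inl ⟨h1, h2⟩
                · exact Or.inr (Or.inr h2)
              · exact Or.inr (Or.inl h1)
          _ ≤ ν A2 + ν ({p : ℝ × ℝ | p.1 = x} ∪ {p : ℝ × ℝ | p.2 = y}) := measure_union_le _ _
          _ ≤ ν A2 + (ν {p : ℝ × ℝ | p.1 = x} + ν {p : ℝ × ℝ | p.2 = y}) :=
              add_le_add_right (measure_union_le _ _) _
          _ = ν A2 := by rw [hLx, hLy]; simp
      rw [le_antisymm hle hge]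
      exact (hF x y).symm
    -- ν A1
    have hA1 : (ν A1).toReal = 1 - FX x - FY y + F x y := by
      have hcomp : A1 = (SX ∪ SY)ᶜ := by
        ext p
        simp only [hA1def, hSXdef, hSYdef, Set.mem_setOf_eq, Set.mem_compl_iff,
          Set.mem_union, not_or, not_le]
      have hUI : ν (SX ∪ SY) + ν (SX ∩ SY) = ν SX + ν SY := measure_union_add_inter SX mSY
      have hIFc : SX ∩ SY = Fc := by
        ext p; simp only [hSXdef, hSYdef, hFcdef, Set.mem_inter_iff, Set.mem_setOf_eq]
      have hU : (ν (SX ∪ SY)).toReal = FX x + FY y - F x y := by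
        have := congrArg ENNReal.toReal hUI
        rw [ENNReal.toReal_add (measure_ne_top _ _) (measure_ne_top _ _),
          ENNReal.toReal_add (measure_ne_top _ _) (measure_ne_top _ _), hIFc] at this
        rw [hFX, hFY, hF]
        linarith [this]
      rw [hcomp, measure_compl (mSX.union mSY) (measure_ne_top _ _), measure_univ,
        ENNReal.toReal_sub_of_le prob_le_one ENNReal.one_ne_top, ENNReal.toReal_one, hU]
      ring
    -- ν B1
    have hB1 : (ν B1).toReal = FY y - F x y := by
      have hB1' : ν B1 = ν (SY \ Fc) := by
        have hsub1 : B1 ⊆ SY \ Fc := by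
          intro p hp
          exact ⟨le_of_lt hp.2, fun h => absurd h.1 (not_le.mpr hp.1)⟩
        have hsub2 : SY \ Fc ⊆ B1 ∪ {p : ℝ × ℝ | p.2 = y} := by
          intro p hp
          rcases lt_or_eq_of_le (show p.2 ≤ y from hp.1) with h2 | h2
          · left
            refine ⟨?_, h2⟩
            by_contra hc
            exact hp.2 ⟨le_of_not_gt hc, hp.1⟩
          · exact Or.inr h2
        apply le_antisymm (measure_mono hsub1)
        calc ν (SY \ Fc) ≤ ν (B1 ∪ {p : ℝ × ℝ | p.2 = y}) := measure_mono hsub2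
          _ ≤ ν B1 + ν {p : ℝ × ℝ | p.2 = y} := measure_union_le _ _
          _ = ν B1 := by rw [hLy]; simp
      have hFcSY : Fc ⊆ SY := fun p hp => hp.2
      rw [hB1', measure_diff hFcSY mFc.nullMeasurableSet (measure_ne_top _ _),
        ENNReal.toReal_sub_of_le (measure_mono hFcSY) (measure_ne_top _ _),
        hFY, hF]
    -- ν B2
    have hB2 : (ν B2).toReal = FX x - F x y := by
      have hB2' : ν B2 = ν (SX \ Fc) := by
        have hsub1 : B2 ⊆ SX \ Fc := by
          intro p hp
          exact ⟨le_of_lt hp.1, fun h => absurd h.2 (not_le.mpr hp.2)⟩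
        have hsub2 : SX \ Fc ⊆ B2 ∪ {p : ℝ × ℝ | p.1 = x} := by
          intro p hp
          rcases lt_or_eq_of_le (show p.1 ≤ x from hp.1) with h2 | h2
          · left
            refine ⟨h2, ?_⟩
            by_contra hc
            exact hp.2 ⟨hp.1, le_of_not_gt hc⟩
          · exact Or.inr h2
        apply le_antisymm (measure_mono hsub1)
        calc ν (SX \ Fc) ≤ ν (B2 ∪ {p : ℝ × ℝ | p.1 = x}) := measure_mono hsub2
          _ ≤ ν B2 + ν {p : ℝ × ℝ | p.1 = x} := measure_union_le _ _
          _ = ν B2 := by rw [hLx]; simp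
      have hFcSX : Fc ⊆ SX := fun p hp => hp.1
      rw [hB2', measure_diff hFcSX mFc.nullMeasurableSet (measure_ne_top _ _),
        ENNReal.toReal_sub_of_le (measure_mono hFcSX) (measure_ne_top _ _),
        hFX, hF]
    rw [hint, hA1, hA2, hB1, hB2]
    ring
  exact ⟨main, fun x y => by rw [main x y]⟩
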